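/- arXiv:1702.05116 — 2 statements merged into one kernel-verified Lean document; each statement's English description precedes it below -/
import Mathlib

section
/- For each k ∈ {0,…,n-1}, the quintic characteristic polynomial P_k(x) given in the beacon-referenced cyclic pursuit linearization factors as P_k(x) = (x² + μ²a²)·[(x³ + μc̃_k x² + μ²a d̃_k x + μ³a² ẽ_k) - j(μĉ_k x² - μ²a d̂_k x + μ³a² ê_k)], where the coefficients c̃_k, ĉ_k, d̃_k, d̂_k, ẽ_k, ê_k are given in terms of a, b, d, λ, k, n, α*. In particular ±jμa are roots of P_k for every k. -/
/-- The quintic characteristic polynomial P_k factors as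
(x² + μ²a²)·[(x³ + μc̃_k x² + μ²a d̃_k x + μ³a² ẽ_k) - j(μĉ_k x² - μ²a d̂_k x + μ³a² ê_k)];
in particular ±jμa are roots of P_k. -/
theorem stmt10 (μ a b d lam αs α₀ : ℝ) (n : ℕ) (hn : 0 < n) (k : ℕ) (hk : k < n) (m : ℤ)
    (ω : ℂ) (hω : ω = Complex.exp (2 * Real.pi * Complex.I / n))
    (hb : b = lam * Real.sin α₀ + (1 - lam) * Real.cos αs)
    (hd : d = a + (1 - lam) * Real.cos αs * Real.cot ((m : ℝ) * Real.pi / n))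
    (ct cH dt dH et eH : ℝ)
    (hct : ct = b + a * (1 - lam) * (Real.sin (k * Real.pi / n)) ^ 2 *
      Real.cot ((m : ℝ) * Real.pi / n))
    (hcH : cH = a * (1 - lam) * Real.sin (k * Real.pi / n) * Real.cos (k * Real.pi / n) *
      Real.cot ((m : ℝ) * Real.pi / n))
    (hdt : dt = d * (Real.sin (k * Real.pi / n)) ^ 2 +
      lam * a * (Real.cos (k * Real.pi / n)) ^ 2)
    (hdH : dH = (lam * a - d) * Real.sin (k * Real.pi / n) * Real.cos (k * Real.pi / n))
    (het : et = (1 - lam) * Real.cos αs * (Real.sin (k * Real.pi / n)) ^ 2)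
    (heH : eH = (1 - lam) * Real.cos αs * Real.sin (k * Real.pi / n) *
      Real.cos (k * Real.pi / n))
    (P : ℂ → ℂ)
    (hP : ∀ x : ℂ, P x =
      x ^ 5
      + (μ : ℂ) * ((b : ℂ) + ((a : ℂ) / 2) * (1 - (lam : ℂ)) * (1 - ω ^ k) *
          ((Real.cot ((m : ℝ) * Real.pi / n) : ℝ) : ℂ)) * x ^ 4
      + ((μ : ℂ) ^ 2 * (a : ℂ) / 2) * (2 * (a : ℂ) + (1 - ω ^ k) * (d : ℂ) +
          (lam : ℂ) * (a : ℂ) * (1 + ω ^ k)) * x ^ 3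
      + ((μ : ℂ) ^ 3 * (a : ℂ) ^ 2 / 2) * (1 - (lam : ℂ)) * (1 - ω ^ k) *
          (((Real.cos αs : ℝ) : ℂ) + (a : ℂ) *
            ((Real.cot ((m : ℝ) * Real.pi / n) : ℝ) : ℂ)) * x ^ 2
      + (μ : ℂ) ^ 3 * (a : ℂ) ^ 2 * (b : ℂ) * x ^ 2
      + ((μ : ℂ) ^ 4 * (a : ℂ) ^ 3 / 2) * ((1 - ω ^ k) * (d : ℂ) +
          (lam : ℂ) * (a : ℂ) * (1 + ω ^ k)) * x
      + ((μ : ℂ) ^ 5 * (a : ℂ) ^ 4 / 2) * (1 - ω ^ k) * (1 - (lam : ℂ)) *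
          ((Real.cos αs : ℝ) : ℂ)) :
    (∀ x : ℂ, P x = (x ^ 2 + (μ : ℂ) ^ 2 * (a : ℂ) ^ 2) *
        (((x ^ 3 + (μ : ℂ) * (ct : ℂ) * x ^ 2 + (μ : ℂ) ^ 2 * (a : ℂ) * (dt : ℂ) * x
            + (μ : ℂ) ^ 3 * (a : ℂ) ^ 2 * (et : ℂ)))
          - Complex.I * ((μ : ℂ) * (cH : ℂ) * x ^ 2 - (μ : ℂ) ^ 2 * (a : ℂ) * (dH : ℂ) * x
            + (μ : ℂ) ^ 3 * (a : ℂ) ^ 2 * (eH : ℂ)))) ∧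
      P (Complex.I * μ * a) = 0 ∧ P (-(Complex.I * μ * a)) = 0 := by
  have hn' : (n : ℂ) ≠ 0 := Nat.cast_ne_zero.mpr hn.ne'
  have hωk : ω ^ k = ((1 - 2 * Real.sin (k * Real.pi / n) ^ 2 : ℝ) : ℂ)
      + ((2 * Real.sin (k * Real.pi / n) * Real.cos (k * Real.pi / n) : ℝ) : ℂ) * Complex.I := by
    have h1 : ω ^ k = Complex.exp ((2 * (k * Real.pi / n) : ℝ) * Complex.I) := by
      rw [hω, ← Complex.exp_nat_mul]
      congr 1
      push_cast
      field_simp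
    rw [h1, Complex.exp_mul_I, ← Complex.ofReal_cos, ← Complex.ofReal_sin,
      Real.cos_two_mul', Real.sin_two_mul]
    have h2 : ((Real.sin ((k:ℝ) * Real.pi / n) : ℂ))^2
        + ((Real.cos ((k:ℝ) * Real.pi / n) : ℂ))^2 = 1 := by
      exact_mod_cast Real.sin_sq_add_cos_sq ((k:ℝ) * Real.pi / n)
    push_cast [← Complex.ofReal_cos, ← Complex.ofReal_sin]
    linear_combination h2
  have hdt' : dt = d * (Real.sin (k * Real.pi / n)) ^ 2
      + lam * a * (1 - (Real.sin (k * Real.pi / n)) ^ 2) := by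
    rw [hdt, Real.cos_sq']
  have key : ∀ x : ℂ, P x = (x ^ 2 + (μ : ℂ) ^ 2 * (a : ℂ) ^ 2) *
        (((x ^ 3 + (μ : ℂ) * (ct : ℂ) * x ^ 2 + (μ : ℂ) ^ 2 * (a : ℂ) * (dt : ℂ) * x
            + (μ : ℂ) ^ 3 * (a : ℂ) ^ 2 * (et : ℂ)))
          - Complex.I * ((μ : ℂ) * (cH : ℂ) * x ^ 2 - (μ : ℂ) ^ 2 * (a : ℂ) * (dH : ℂ) * x
            + (μ : ℂ) ^ 3 * (a : ℂ) ^ 2 * (eH : ℂ))) := by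
    intro x
    rw [hP x, hωk, hct, hcH, hdt', hdH, het, heH]
    push_cast
    ring
  refine ⟨key, ?_, ?_⟩
  · rw [key]
    apply mul_eq_zero_of_left
    linear_combination (μ:ℂ)^2 * (a:ℂ)^2 * Complex.I_sq
  · rw [key]
    apply mul_eq_zero_of_left
    linear_combination (μ:ℂ)^2 * (a:ℂ)^2 * Complex.I_sq
end

section
/- Under the hypotheses μ > 0, λ ∈ (0,1), k ∈ {1,…,n-1}, and (1-λ)sin(kπ/n - α) + λ cos α₀ ≤ 0, the open region Δ = {(κ₁, ρ₁) : kπ/n < κ₁ < kπ/n + π, ρ₁ > 0} is positively invariant for the flow of κ̇₁ = -μ[(1-λ)sin(κ₁-α) + λcos(κ₁ - kπ/n - α₀)] + (2λ/ρ₁)cos(κ₁ - kπ/n)sin(kπ/n), ρ̇₁ = 2 sin(κ₁ - kπ/n) sin(kπ/n): specifically, on Δ one has ρ̇₁ > 0, on the boundary κ₁ = kπ/n one has κ̇₁ > 0, and on the boundary κ₁ = kπ/n + π one has κ̇₁ < 0. -/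
/-- If (1-λ)sin(kπ/n - α) + λ cos α₀ ≤ 0, the region
Δ = {(κ₁, ρ₁) : kπ/n < κ₁ < kπ/n + π, ρ₁ > 0} is positively invariant:
ρ̇₁ > 0 on Δ, κ̇₁ > 0 on the boundary κ₁ = kπ/n, and κ̇₁ < 0 on κ₁ = kπ/n + π. -/
theorem stmt18 (n k : ℕ) (hn : 2 ≤ n) (hk : 1 ≤ k) (hk2 : k < n)
    (μ lam α α₀ : ℝ) (hμ : 0 < μ) (hlam0 : 0 < lam) (hlam1 : lam < 1)
    (hcond : (1 - lam) * Real.sin (k * Real.pi / n - α) + lam * Real.cos α₀ ≤ 0)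
    (f g : ℝ → ℝ → ℝ)
    (hf : ∀ κ ρ : ℝ, f κ ρ =
      -μ * ((1 - lam) * Real.sin (κ - α) + lam * Real.cos (κ - k * Real.pi / n - α₀)) +
        (2 * lam / ρ) * Real.cos (κ - k * Real.pi / n) * Real.sin (k * Real.pi / n))
    (hg : ∀ κ ρ : ℝ, g κ ρ =
      2 * Real.sin (κ - k * Real.pi / n) * Real.sin (k * Real.pi / n)) :
    (∀ κ ρ : ℝ, k * Real.pi / n < κ → κ < k * Real.pi / n + Real.pi → ρ > 0 →
      g κ ρ > 0) ∧
    (∀ ρ : ℝ, ρ > 0 → f (k * Real.pi / n) ρ > 0) ∧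
    (∀ ρ : ℝ, ρ > 0 → f (k * Real.pi / n + Real.pi) ρ < 0) := by
  have hπ := Real.pi_pos
  have hn0 : (0:ℝ) < n := by positivity
  have hkn : (0:ℝ) < k * Real.pi / n := by
    have : (0:ℝ) < (k:ℝ) := by exact_mod_cast hk
    positivity
  have hkn2 : k * Real.pi / n < Real.pi := by
    rw [div_lt_iff₀ hn0]
    have : (k:ℝ) < n := by exact_mod_cast hk2
    nlinarith
  have hs : 0 < Real.sin (k * Real.pi / n) := Real.sin_pos_of_pos_of_lt_pi hkn hkn2
  refine ⟨?_, ?_, ?_⟩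
  · intro κ ρ h1 h2 hρ
    rw [hg]
    have hs2 : 0 < Real.sin (κ - k * Real.pi / n) :=
      Real.sin_pos_of_pos_of_lt_pi (by linarith) (by linarith)
    positivity
  · intro ρ hρ
    rw [hf]
    have e1 : (k:ℝ) * Real.pi / n - k * Real.pi / n = 0 := by ring
    have h2 : (2 * lam / ρ) * Real.cos ((k:ℝ) * Real.pi / n - k * Real.pi / n) *
        Real.sin (k * Real.pi / n) > 0 := by
      rw [e1, Real.cos_zero]; positivity
    have h3 : -μ * ((1 - lam) * Real.sin ((k:ℝ) * Real.pi / n - α) +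
        lam * Real.cos ((k:ℝ) * Real.pi / n - k * Real.pi / n - α₀)) ≥ 0 := by
      have : (k:ℝ) * Real.pi / n - k * Real.pi / n - α₀ = -α₀ := by ring
      rw [this, Real.cos_neg]
      nlinarith
    linarith
  · intro ρ hρ
    rw [hf]
    have e1 : (k:ℝ) * Real.pi / n + Real.pi - k * Real.pi / n = Real.pi := by ring
    have h2 : (2 * lam / ρ) * Real.cos ((k:ℝ) * Real.pi / n + Real.pi - k * Real.pi / n) *
        Real.sin (k * Real.pi / n) < 0 := by
      rw [e1, Real.cos_pi]
      have : (2 * lam / ρ) * Real.sin (k * Real.pi / n) > 0 := by positivity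
      nlinarith
    have h3 : -μ * ((1 - lam) * Real.sin ((k:ℝ) * Real.pi / n + Real.pi - α) +
        lam * Real.cos ((k:ℝ) * Real.pi / n + Real.pi - k * Real.pi / n - α₀)) ≤ 0 := by
      have ea : (k:ℝ) * Real.pi / n + Real.pi - α = (k * Real.pi / n - α) + Real.pi := by ring
      have eb : (k:ℝ) * Real.pi / n + Real.pi - k * Real.pi / n - α₀ = Real.pi - α₀ := by ring
      rw [ea, eb, Real.sin_add_pi, Real.cos_pi_sub]
      nlinarith
    linarith
end
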